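/- arXiv:2305.06766 — 3 statements merged into one kernel-verified Lean document; each statement's English description precedes it below -/
import Mathlib

section
/- Let (Ω, ℙ) be a probability space, χ ∈ [1,2], and let (Z_n)_{n∈ℕ} be real random variables on Ω. Suppose there are nonnegative reals K_{n,m} such that for all n, m and all t ∈ ℝ the characteristic function of Z_n − Z_m equals exp(−K_{n,m}|t|^χ), and K_{n,m} → 0 as n, m → ∞. Then there exists a real random variable Z on Ω such that Z_n converges to Z in probability. -/
open MeasureTheory ProbabilityTheory Filter Topology

/-- The characteristic function of a real random variable `Z` on `(Ω, P)`:
`φ_Z(t) = E[exp(i t Z)]`. -/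
noncomputable def charFn {Ω : Type*} [MeasurableSpace Ω] (P : Measure Ω) (Z : Ω → ℝ) (t : ℝ) : ℂ :=
  ∫ ω, Complex.exp (t * Z ω * Complex.I) ∂P

open scoped ENNReal NNReal

lemma charFn_re {Ω : Type*} [MeasurableSpace Ω] (P : Measure Ω) [IsProbabilityMeasure P]
    (X : Ω → ℝ) (hX : Measurable X) (r : ℝ)
    (t : ℝ) (h : charFn P X t = (r : ℂ)) :
    (∫ ω, Real.cos (t * X ω) ∂P) = r := by
  have hm : Measurable (fun ω => Complex.exp (↑t * ↑(X ω) * Complex.I)) := by fun_prop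
  have hb : ∀ ω, ‖Complex.exp (↑t * ↑(X ω) * Complex.I)‖ ≤ (1:ℝ) := by
    intro ω
    have h2 : ((t : ℂ) * (X ω : ℂ) * Complex.I) = ((t * X ω : ℝ) : ℂ) * Complex.I := by
      push_cast; ring
    rw [h2]
    simp [Complex.norm_exp]
  have hint : Integrable (fun ω => Complex.exp (↑t * ↑(X ω) * Complex.I)) P :=
    Integrable.mono' (integrable_const (1:ℝ)) hm.aestronglyMeasurable
      (Filter.Eventually.of_forall hb)
  have h2 := integral_re (𝕜 := ℂ) hint
  simp only [RCLike.re_to_complex] at h2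
  have h' := congrArg Complex.re h
  rw [charFn] at h'
  rw [← h2] at h'
  have heq : ∀ ω, (Complex.exp (↑t * ↑(X ω) * Complex.I)).re = Real.cos (t * X ω) := by
    intro ω
    have h2 : ((t : ℂ) * (X ω : ℂ) * Complex.I) = ((t * X ω : ℝ) : ℂ) * Complex.I := by
      push_cast; ring
    rw [h2, Complex.exp_ofReal_mul_I_re]
  simp only [heq, Complex.ofReal_re] at h'
  exact h'

/-- auxiliary kernel -/
noncomputable def gker (y : ℝ) : ℝ := if y = 0 then 0 else 2 - 2 * Real.sin y / y

lemma gker_eval (y : ℝ) : (∫ s in (-1:ℝ)..1, (1 - Real.cos (s * y))) = gker y := by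
  rcases eq_or_ne y 0 with hy | hy
  · simp [gker, hy]
  · have h1 : IntervalIntegrable (fun _ : ℝ => (1:ℝ)) MeasureTheory.volume (-1) 1 :=
      intervalIntegrable_const
    have h2 : IntervalIntegrable (fun s : ℝ => Real.cos (s * y)) MeasureTheory.volume (-1) 1 :=
      (Real.continuous_cos.comp (continuous_id.mul continuous_const)).intervalIntegrable _ _
    rw [intervalIntegral.integral_sub h1 h2]
    have hc : (∫ s in (-1:ℝ)..1, Real.cos (s * y)) = y⁻¹ • ∫ x in (-1*y)..(1*y), Real.cos x :=
      intervalIntegral.integral_comp_mul_right Real.cos hy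
    rw [hc, integral_cos]
    simp only [gker, hy, if_false, intervalIntegral.integral_const, smul_eq_mul, one_mul,
      neg_one_mul, Real.sin_neg]
    field_simp
    ring

lemma abs_sin_div_le (y : ℝ) (hy : y ≠ 0) : |Real.sin y / y| ≤ 1 := by
  rw [abs_div]
  exact div_le_one_of_le₀ (Real.abs_sin_le_abs) (abs_nonneg _)

lemma gker_nonneg (y : ℝ) : 0 ≤ gker y := by
  rcases eq_or_ne y 0 with hy | hy
  · simp [gker, hy]
  · simp only [gker, hy, if_false]
    have h := abs_sin_div_le y hy
    have h2 : Real.sin y / y ≤ 1 := (abs_le.mp h).2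
    rw [mul_div_assoc]
    linarith

lemma gker_le_four (y : ℝ) : gker y ≤ 4 := by
  rcases eq_or_ne y 0 with hy | hy
  · simp [gker, hy]
  · simp only [gker, hy, if_false]
    have h := abs_sin_div_le y hy
    have h2 : -1 ≤ Real.sin y / y := (abs_le.mp h).1
    rw [mul_div_assoc]
    linarith

lemma gker_ge_one {y : ℝ} (hy : 2 ≤ |y|) : 1 ≤ gker y := by
  have hy0 : y ≠ 0 := by intro h; rw [h] at hy; simp at hy; linarith
  simp only [gker, hy0, if_false]
  have habs : |Real.sin y| ≤ 1 := abs_le.mpr ⟨Real.neg_one_le_sin y, Real.sin_le_one y⟩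
  have h : |Real.sin y / y| ≤ 1 / 2 := by
    rw [abs_div, div_le_div_iff₀ (abs_pos.mpr hy0) (by norm_num)]
    nlinarith
  have h2 : Real.sin y / y ≤ 1/2 := (abs_le.mp h).2
  rw [mul_div_assoc]
  linarith

lemma gker_measurable : Measurable gker := by
  unfold gker
  refine Measurable.ite (measurableSet_eq) measurable_const ?_
  exact measurable_const.sub ((measurable_const.mul Real.measurable_sin).div measurable_id)

/-- Main tail bound from the characteristic function. -/
lemma tail_bound {Ω : Type*} [MeasurableSpace Ω] (P : Measure Ω) [IsProbabilityMeasure P]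
    (χ : ℝ) (hχ1 : 1 ≤ χ) (X : Ω → ℝ) (hX : Measurable X) (k : ℝ) (hk : 0 ≤ k)
    (hchar : ∀ t : ℝ, charFn P X t = (Real.exp (-(k * |t| ^ χ)) : ℂ))
    (ε : ℝ) (hε : 0 < ε) :
    (P {ω | ε < |X ω|}).toReal ≤ 2 * k * (2/ε) ^ χ := by
  have hχ0 : (0:ℝ) ≤ χ := by linarith
  set u : ℝ := 2 / ε with hu_def
  have hu : 0 < u := by positivity
  -- Step 1: real part of the char fn
  have hcos : ∀ t : ℝ, (∫ ω, Real.cos (t * X ω) ∂P) = Real.exp (-(k * |t| ^ χ)) :=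
    fun t => charFn_re P X hX _ t (hchar t)
  -- Fubini setup
  set μs : Measure ℝ := MeasureTheory.volume.restrict (Set.Ioc (-1:ℝ) 1) with hμs
  haveI : IsFiniteMeasure μs := by
    constructor
    rw [hμs, Measure.restrict_apply_univ, Real.volume_Ioc]
    exact ENNReal.ofReal_lt_top
  have hFm : Measurable (fun p : Ω × ℝ => 1 - Real.cos (p.2 * (u * X p.1))) := by
    exact measurable_const.sub (Real.measurable_cos.comp
      (measurable_snd.mul (measurable_const.mul (hX.comp measurable_fst))))
  have hFint : Integrable (Function.uncurry fun (ω : Ω) (s : ℝ) => 1 - Real.cos (s * (u * X ω)))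
      (P.prod μs) := by
    refine (integrable_const (2:ℝ)).mono' ?_ ?_
    · exact hFm.aestronglyMeasurable
    · filter_upwards with p
      have h1 := Real.neg_one_le_cos (p.2 * (u * X p.1))
      have h2 := Real.cos_le_one (p.2 * (u * X p.1))
      rw [Real.norm_eq_abs, abs_le]
      simp only [Function.uncurry]
      constructor <;> linarith
  have hswap := MeasureTheory.integral_integral_swap hFint
  -- inner integral over s
  have hinner : ∀ ω, (∫ s, (1 - Real.cos (s * (u * X ω))) ∂μs) = gker (u * X ω) := by
    intro ω
    rw [hμs, ← intervalIntegral.integral_of_le (by norm_num : (-1:ℝ) ≤ 1)]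
    exact gker_eval (u * X ω)
  -- inner integral over ω
  have hinner2 : ∀ s : ℝ, (∫ ω, (1 - Real.cos (s * (u * X ω))) ∂P)
      = 1 - Real.exp (-(k * |s * u| ^ χ)) := by
    intro s
    have hint : Integrable (fun ω => Real.cos ((s * u) * X ω)) P := by
      refine (integrable_const (1:ℝ)).mono' ?_ ?_
      · exact (Real.measurable_cos.comp (measurable_const.mul hX)).aestronglyMeasurable
      · filter_upwards with ω
        rw [Real.norm_eq_abs]
        exact Real.abs_cos_le_one _
    have : (fun ω => 1 - Real.cos (s * (u * X ω))) = fun ω => 1 - Real.cos ((s * u) * X ω) := by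
      funext ω; ring_nf
    rw [this, integral_sub (integrable_const 1) hint, hcos (s * u)]
    simp
  -- the main identity
  have hmain : (∫ ω, gker (u * X ω) ∂P) = ∫ s, (1 - Real.exp (-(k * |s * u| ^ χ))) ∂μs := by
    calc (∫ ω, gker (u * X ω) ∂P) = ∫ ω, ∫ s, (1 - Real.cos (s * (u * X ω))) ∂μs ∂P := by
          congr 1; funext ω; rw [hinner]
    _ = ∫ s, ∫ ω, (1 - Real.cos (s * (u * X ω))) ∂P ∂μs := hswap
    _ = ∫ s, (1 - Real.exp (-(k * |s * u| ^ χ))) ∂μs := by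
          congr 1; funext s; rw [hinner2]
  -- bound the RHS
  have hrhs : (∫ s, (1 - Real.exp (-(k * |s * u| ^ χ))) ∂μs) ≤ 2 * (k * u ^ χ) := by
    have hb : ∀ᵐ s ∂μs, ‖1 - Real.exp (-(k * |s * u| ^ χ))‖ ≤ k * u ^ χ := by
      rw [hμs]
      filter_upwards [ae_restrict_mem measurableSet_Ioc] with s hs
      have hs1 : |s| ≤ 1 := by
        rw [abs_le]; exact ⟨le_of_lt hs.1, hs.2⟩
      have hsu : |s * u| ≤ u := by
        rw [abs_mul, abs_of_pos hu]
        nlinarith [abs_nonneg s]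
      have hrp : |s * u| ^ χ ≤ u ^ χ := Real.rpow_le_rpow (abs_nonneg _) hsu hχ0
      have ha : 0 ≤ k * |s * u| ^ χ := by positivity
      have hle : k * |s * u| ^ χ ≤ k * u ^ χ := by nlinarith
      have h1 : Real.exp (-(k * |s * u| ^ χ)) ≤ 1 := by
        rw [Real.exp_le_one_iff]; linarith
      have h2 : 1 - Real.exp (-(k * |s * u| ^ χ)) ≤ k * |s * u| ^ χ := by
        have := Real.add_one_le_exp (-(k * |s * u| ^ χ))
        linarith
      rw [Real.norm_eq_abs, abs_le]
      constructor
      · have : (0:ℝ) ≤ k * u ^ χ := by positivity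
        linarith
      · linarith
    have := norm_integral_le_of_norm_le_const hb
    have hμuniv : (μs Set.univ).toReal = 2 := by
      rw [hμs, Measure.restrict_apply_univ, Real.volume_Ioc]
      rw [ENNReal.toReal_ofReal (by norm_num)]
      norm_num
    rw [measureReal_def, hμuniv] at this
    calc (∫ s, (1 - Real.exp (-(k * |s * u| ^ χ))) ∂μs)
        ≤ ‖∫ s, (1 - Real.exp (-(k * |s * u| ^ χ))) ∂μs‖ := Real.le_norm_self _
    _ ≤ k * u ^ χ * 2 := this
    _ = 2 * (k * u ^ χ) := by ring
  -- Markov step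
  set S : Set Ω := {ω | 2 ≤ |u * X ω|} with hS_def
  have hS : MeasurableSet S := by
    apply measurableSet_le measurable_const
    exact (measurable_const.mul hX).abs
  have hgint : Integrable (fun ω => gker (u * X ω)) P := by
    refine (integrable_const (4:ℝ)).mono' ?_ ?_
    · exact (gker_measurable.comp (measurable_const.mul hX)).aestronglyMeasurable
    · filter_upwards with ω
      rw [Real.norm_eq_abs, abs_le]
      exact ⟨by linarith [gker_nonneg (u * X ω)], gker_le_four (u * X ω)⟩
  have hmarkov : (P S).toReal ≤ ∫ ω, gker (u * X ω) ∂P := by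
    rw [← measureReal_def, ← MeasureTheory.integral_indicator_one hS]
    refine integral_mono ((integrable_const (1:ℝ)).indicator hS) hgint ?_
    intro ω
    by_cases hω : ω ∈ S
    · rw [Set.indicator_of_mem hω]
      exact gker_ge_one hω
    · rw [Set.indicator_of_notMem hω]
      exact gker_nonneg _
  -- set inclusion
  have hsub : {ω | ε < |X ω|} ⊆ S := by
    intro ω hω
    have hω' : ε < |X ω| := hω
    show (2:ℝ) ≤ |u * X ω|
    rw [abs_mul, abs_of_pos hu]
    have : u * ε = 2 := by
      rw [hu_def]; field_simp
    nlinarith [hω']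
  have hmono : (P {ω | ε < |X ω|}).toReal ≤ (P S).toReal := by
    apply ENNReal.toReal_mono (measure_ne_top P S)
    exact measure_mono hsub
  calc (P {ω | ε < |X ω|}).toReal ≤ (P S).toReal := hmono
  _ ≤ ∫ ω, gker (u * X ω) ∂P := hmarkov
  _ = ∫ s, (1 - Real.exp (-(k * |s * u| ^ χ))) ∂μs := hmain
  _ ≤ 2 * (k * u ^ χ) := hrhs
  _ = 2 * k * (2/ε) ^ χ := by rw [hu_def]; ring

/-- auxiliary increasing index sequence -/
def buildSeq (N : ℕ → ℕ) : ℕ → ℕ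
  | 0 => N 0
  | k+1 => max (N (k+1)) (buildSeq N k + 1)

lemma buildSeq_strictMono (N : ℕ → ℕ) : StrictMono (buildSeq N) :=
  strictMono_nat_of_lt_succ fun k =>
    lt_of_lt_of_le (Nat.lt_succ_self _) (le_max_right _ _)

lemma buildSeq_ge (N : ℕ → ℕ) (k : ℕ) : N k ≤ buildSeq N k := by
  cases k with
  | zero => exact le_refl _
  | succ k => exact le_max_left _ _


/-- If the differences `Z n - Z m` have symmetric `χ`-stable characteristic functions
`exp(-K n m * |t|^χ)` with `K n m → 0` as `n, m → ∞`, then `Z n` converges in probability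
to some random variable `Zlim`. -/
theorem statement0
    {Ω : Type*} [MeasurableSpace Ω] (P : Measure Ω) [IsProbabilityMeasure P]
    (χ : ℝ) (hχ : χ ∈ Set.Icc (1 : ℝ) 2)
    (Z : ℕ → Ω → ℝ) (hZ : ∀ n, Measurable (Z n))
    (K : ℕ → ℕ → ℝ) (hK : ∀ n m, 0 ≤ K n m)
    (hchar : ∀ n m t, charFn P (fun ω => Z n ω - Z m ω) t
      = (Real.exp (-(K n m * |t| ^ χ)) : ℂ))
    (hKlim : Tendsto (fun p : ℕ × ℕ => K p.1 p.2) atTop (𝓝 0)) :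
    ∃ Zlim : Ω → ℝ, Measurable Zlim ∧
      ∀ ε > (0 : ℝ), Tendsto (fun n => P {ω | ε < |Z n ω - Zlim ω|}) atTop (𝓝 0) := by
  obtain ⟨hχ1, hχ2⟩ := hχ
  -- key tail bound in ℝ≥0∞
  have key : ∀ ε : ℝ, 0 < ε → ∀ n m : ℕ,
      P {ω | ε < |Z n ω - Z m ω|} ≤ ENNReal.ofReal (2 * K n m * (2/ε) ^ χ) := by
    intro ε hε n m
    have h := tail_bound P χ hχ1 (fun ω => Z n ω - Z m ω) ((hZ n).sub (hZ m))
      (K n m) (hK n m) (hchar n m) ε hε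
    rw [← ENNReal.ofReal_toReal (measure_ne_top P {ω | ε < |Z n ω - Z m ω|})]
    exact ENNReal.ofReal_le_ofReal h
  -- from hKlim: K is eventually small
  have choose_N : ∀ δ : ℝ, 0 < δ → ∃ N : ℕ, ∀ n m : ℕ, N ≤ n → N ≤ m → K n m < δ := by
    intro δ hδ
    have h : ∀ᶠ p : ℕ × ℕ in atTop, K p.1 p.2 < δ :=
      hKlim.eventually (eventually_of_mem (Iio_mem_nhds hδ) fun x hx => hx)
    rw [Filter.eventually_atTop] at h
    obtain ⟨a, ha⟩ := h
    refine ⟨max a.1 a.2, fun n m hn hm => ha (n, m) ?_⟩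
    exact ⟨le_trans (le_max_left _ _) hn, le_trans (le_max_right _ _) hm⟩
  -- choose thresholds for the subsequence
  have hNs : ∀ k : ℕ, ∃ N : ℕ, ∀ n m : ℕ, N ≤ n → N ≤ m →
      2 * K n m * (2 / ((1/2:ℝ)^k)) ^ χ ≤ (1/2:ℝ)^k := by
    intro k
    have hC : (0:ℝ) < (2 / ((1/2:ℝ)^k)) ^ χ := by positivity
    set C : ℝ := (2 / ((1/2:ℝ)^k)) ^ χ with hC_def
    have hδ : (0:ℝ) < ((1/2:ℝ)^k) / (2 * C + 1) := by positivity
    obtain ⟨N, hN⟩ := choose_N _ hδ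
    refine ⟨N, fun n m hn hm => ?_⟩
    have h := hN n m hn hm
    have hKnn := hK n m
    rw [lt_div_iff₀ (by positivity : (0:ℝ) < 2 * C + 1)] at h
    nlinarith [pow_pos (by norm_num : (0:ℝ) < 1/2) k]
  choose Nseq hNseq using hNs
  set φ : ℕ → ℕ := buildSeq Nseq with hφ_def
  have hφmono : StrictMono φ := buildSeq_strictMono Nseq
  have hφge : ∀ k, Nseq k ≤ φ k := buildSeq_ge Nseq
  have hφge' : ∀ k, Nseq k ≤ φ (k+1) := fun k =>
    le_trans (le_trans (hφge k) (le_of_lt (hφmono (Nat.lt_succ_self k)))) (le_refl _)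
  -- the exceptional sets
  set E : ℕ → Set Ω := fun k => {ω | (1/2:ℝ)^k < |Z (φ (k+1)) ω - Z (φ k) ω|} with hE_def
  have hEk : ∀ k, P (E k) ≤ ENNReal.ofReal ((1/2:ℝ)^k) := by
    intro k
    refine le_trans (key _ (by positivity) (φ (k+1)) (φ k)) ?_
    exact ENNReal.ofReal_le_ofReal (hNseq k _ _ (hφge' k) (hφge k))
  have hsum : (∑' k, P (E k)) ≠ ⊤ := by
    have h1 : (∑' k, P (E k)) ≤ ∑' k : ℕ, ((2:ℝ≥0∞)⁻¹) ^ k := by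
      refine ENNReal.tsum_le_tsum fun k => le_trans (hEk k) ?_
      have : ENNReal.ofReal ((1/2:ℝ)^k) = ((2:ℝ≥0∞)⁻¹) ^ k := by
        rw [ENNReal.ofReal_pow (by norm_num : (0:ℝ) ≤ 1/2)]
        congr 1
        rw [one_div, ENNReal.ofReal_inv_of_pos (by norm_num : (0:ℝ) < 2)]
        norm_num
      rw [this]
    have h2 : (∑' k : ℕ, ((2:ℝ≥0∞)⁻¹) ^ k) = 2 := by
      rw [ENNReal.tsum_geometric, ENNReal.one_sub_inv_two, inv_inv]
    exact ne_top_of_le_ne_top (by rw [h2]; exact ENNReal.ofNat_ne_top) h1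
  -- a.e. Cauchy along the subsequence
  have h_cauchy : ∀ᵐ ω ∂P, ∃ c : ℝ, Tendsto (fun k => Z (φ k) ω) atTop (𝓝 c) := by
    filter_upwards [ae_eventually_notMem hsum] with ω hω
    rw [Filter.eventually_atTop] at hω
    obtain ⟨k0, hk0⟩ := hω
    have hd : Summable (fun k => dist (Z (φ k) ω) (Z (φ (k+1)) ω)) := by
      rw [← summable_nat_add_iff k0]
      refine Summable.of_nonneg_of_le (fun j => dist_nonneg) (fun j => ?_)
        (((summable_geometric_of_lt_one (by norm_num : (0:ℝ) ≤ 1/2)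
          (by norm_num)).mul_right ((1/2:ℝ)^k0)))
      have h := hk0 (j + k0) (Nat.le_add_left _ _)
      rw [hE_def, Set.mem_setOf_eq, not_lt] at h
      rw [Real.dist_eq, abs_sub_comm]
      calc |Z (φ (j + k0 + 1)) ω - Z (φ (j + k0)) ω| ≤ (1/2:ℝ)^(j+k0) := h
      _ = (1/2:ℝ)^j * (1/2:ℝ)^k0 := by rw [pow_add]
    exact cauchySeq_tendsto_of_complete
      (cauchySeq_of_dist_le_of_summable _ (fun n => le_refl _) hd)
  obtain ⟨Zlim, hZlimM, hZlimT⟩ := exists_stronglyMeasurable_limit_of_tendsto_ae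
    (fun k => (hZ (φ k)).aestronglyMeasurable) h_cauchy
  have h_inmeas : TendstoInMeasure P (fun k => Z (φ k)) atTop Zlim :=
    tendstoInMeasure_of_tendsto_ae (fun k => (hZ (φ k)).aestronglyMeasurable) hZlimT
  refine ⟨Zlim, hZlimM.measurable, ?_⟩
  intro ε hε
  rw [ENNReal.tendsto_atTop_zero]
  intro δ hδ
  -- the target half-bound
  set δ' : ℝ≥0∞ := min (δ/2) 1 with hδ'_def
  have hδ'top : δ' ≠ ⊤ := ne_top_of_le_ne_top ENNReal.one_ne_top (min_le_right _ _)
  have hδ'pos : 0 < δ'.toReal := by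
    rw [ENNReal.toReal_pos_iff]
    constructor
    · rw [hδ'_def]
      exact lt_min (ENNReal.div_pos hδ.ne' ENNReal.ofNat_ne_top) zero_lt_one
    · exact lt_top_iff_ne_top.mpr hδ'top
  -- get uniform smallness of the tail bound at level ε/2
  have hC : (0:ℝ) < (2 / (ε/2)) ^ χ := by positivity
  set C : ℝ := (2 / (ε/2)) ^ χ with hC_def
  obtain ⟨N, hN⟩ := choose_N (δ'.toReal / (2 * C + 1)) (by positivity)
  -- convergence in measure of the subsequence at level ε/2
  have h1 := (ENNReal.tendsto_atTop_zero.mp (tendstoInMeasure_iff_dist.mp h_inmeas (ε/2) (by positivity))) (δ/2)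
    (ENNReal.div_pos hδ.ne' ENNReal.ofNat_ne_top)
  obtain ⟨k1, hk1⟩ := h1
  set k : ℕ := max k1 N with hk_def
  have hφkN : N ≤ φ k := le_trans (le_max_right _ _) (hφmono.le_apply)
  refine ⟨N, fun n hn => ?_⟩
  -- split the event
  have hsub : {ω | ε < |Z n ω - Zlim ω|} ⊆
      {ω | ε/2 < |Z n ω - Z (φ k) ω|} ∪ {ω | ε/2 ≤ dist (Z (φ k) ω) (Zlim ω)} := by
    intro ω hω
    have hω' : ε < |Z n ω - Zlim ω| := hω
    by_contra hcon
    rw [Set.mem_union] at hcon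
    push_neg at hcon
    obtain ⟨h1', h2'⟩ := hcon
    rw [Set.mem_setOf_eq, not_lt] at h1'
    rw [Set.mem_setOf_eq, not_le, Real.dist_eq] at h2'
    have := abs_sub_le (Z n ω) (Z (φ k) ω) (Zlim ω)
    linarith
  have hterm1 : P {ω | ε/2 < |Z n ω - Z (φ k) ω|} ≤ δ/2 := by
    refine le_trans (key (ε/2) (by positivity) n (φ k)) ?_
    have hKsmall := hN n (φ k) hn hφkN
    rw [lt_div_iff₀ (by positivity : (0:ℝ) < 2 * C + 1)] at hKsmall
    have hb : 2 * K n (φ k) * C ≤ δ'.toReal := by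
      nlinarith [hK n (φ k)]
    calc ENNReal.ofReal (2 * K n (φ k) * (2/(ε/2)) ^ χ)
        ≤ ENNReal.ofReal δ'.toReal := ENNReal.ofReal_le_ofReal (by rw [← hC_def]; exact hb)
    _ = δ' := ENNReal.ofReal_toReal hδ'top
    _ ≤ δ/2 := min_le_left _ _
  have hterm2 : P {ω | ε/2 ≤ dist (Z (φ k) ω) (Zlim ω)} ≤ δ/2 :=
    hk1 k (le_max_left _ _)
  calc P {ω | ε < |Z n ω - Zlim ω|}
      ≤ P ({ω | ε/2 < |Z n ω - Z (φ k) ω|} ∪ {ω | ε/2 ≤ dist (Z (φ k) ω) (Zlim ω)}) :=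
        measure_mono hsub
  _ ≤ P {ω | ε/2 < |Z n ω - Z (φ k) ω|} + P {ω | ε/2 ≤ dist (Z (φ k) ω) (Zlim ω)} :=
        measure_union_le _ _
  _ ≤ δ/2 + δ/2 := add_le_add hterm1 hterm2
  _ = δ := ENNReal.add_halves δ
end

section
/- Let K ≥ 0 and χ ∈ (0,2], and let Z be a real random variable on a probability space (Ω, ℙ) whose characteristic function is t ↦ exp(−K|t|^χ). Then for every ε > 0, ℙ(|Z| > ε) ≤ 2^{χ+1} K / ((χ+1) ε^χ). -/
open MeasureTheory ProbabilityTheory Filter Topology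

/-- Tail estimate for symmetric `χ`-stable random variables (core inequality of the paper's
Lemma 3.1): if `Z` has characteristic function `exp(-K|t|^χ)`, then
`P(|Z| > ε) ≤ 2^{χ+1} K / ((χ+1) ε^χ)`. -/
theorem statement5
    {Ω : Type*} [MeasurableSpace Ω] (P : Measure Ω) [IsProbabilityMeasure P]
    (K χ : ℝ) (hK : 0 ≤ K) (hχ : χ ∈ Set.Ioc (0 : ℝ) 2)
    (Z : Ω → ℝ) (hZ : Measurable Z)
    (hchar : ∀ t, charFn P Z t = (Real.exp (-(K * |t| ^ χ)) : ℂ)) :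
    ∀ ε > (0 : ℝ), P {ω | ε < |Z ω|}
      ≤ ENNReal.ofReal (2 ^ (χ + 1) * K / ((χ + 1) * ε ^ χ)) := by
  obtain ⟨hχ0, hχ2⟩ := hχ
  intro ε hε
  set u : ℝ := 2 / ε with hu_def
  have hu : 0 < u := by positivity
  have hχ1 : (0:ℝ) < χ + 1 := by linarith
  -- the real characteristic function
  have hexpint : ∀ t : ℝ, Integrable (fun ω => Complex.exp (t * Z ω * Complex.I)) P := by
    intro t
    apply Integrable.mono' (integrable_const (1:ℝ))
    · exact (Complex.measurable_exp.comp ((measurable_const.mul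
        (Complex.measurable_ofReal.comp hZ)).mul measurable_const)).aestronglyMeasurable
    · filter_upwards with ω
      rw [show ((t:ℂ) * Z ω * Complex.I) = ((t * Z ω : ℝ) : ℂ) * Complex.I by push_cast; ring]
      rw [Complex.norm_exp_ofReal_mul_I]
  have hcosint : ∀ t : ℝ, Integrable (fun ω => Real.cos (t * Z ω)) P := by
    intro t
    apply Integrable.mono' (integrable_const (1:ℝ))
    · exact (Real.measurable_cos.comp (measurable_const.mul hZ)).aestronglyMeasurable
    · filter_upwards with ω
      simpa using Real.abs_cos_le_one (t * Z ω)
  have hcos : ∀ t : ℝ, ∫ ω, Real.cos (t * Z ω) ∂P = Real.exp (-(K * |t| ^ χ)) := by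
    intro t
    have h1 : ∫ ω, Real.cos (t * Z ω) ∂P
        = (∫ ω, Complex.exp (t * Z ω * Complex.I) ∂P).re := by
      rw [show (∫ ω, Complex.exp (t * Z ω * Complex.I) ∂P).re
          = RCLike.re (∫ ω, Complex.exp (t * Z ω * Complex.I) ∂P) from rfl,
        ← integral_re (hexpint t)]
      congr 1; funext ω
      rw [show ((t:ℂ) * Z ω * Complex.I) = ((t * Z ω : ℝ) : ℂ) * Complex.I by push_cast; ring]
      exact (Complex.exp_ofReal_mul_I_re _).symm
    rw [h1, show (∫ ω, Complex.exp (t * Z ω * Complex.I) ∂P) = charFn P Z t from rfl, hchar t]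
    exact Complex.ofReal_re _
  -- the inner P-integral
  have hinner : ∀ t : ℝ, ∫ ω, (1 - Real.cos (t * Z ω)) ∂P = 1 - Real.exp (-(K * |t| ^ χ)) := by
    intro t
    rw [integral_sub (integrable_const 1) (hcosint t), hcos t, integral_const]
    simp
  -- the restricted measure on (0, u]
  set ν : Measure ℝ := volume.restrict (Set.Ioc 0 u) with hν
  have hνfin : IsFiniteMeasure ν := by
    constructor
    rw [hν, Measure.restrict_apply_univ, Real.volume_Ioc]
    exact ENNReal.ofReal_lt_top
  -- integrability on the product
  have hFint : Integrable (Function.uncurry fun t ω => 1 - Real.cos (t * Z ω)) (ν.prod P) := by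
    apply Integrable.mono' (integrable_const (2:ℝ))
    · exact ((measurable_const.sub (Real.measurable_cos.comp
        (measurable_fst.mul (hZ.comp measurable_snd))))).aestronglyMeasurable
    · filter_upwards with p
      have h1 := Real.cos_le_one (p.1 * Z p.2)
      have h2 := Real.neg_one_le_cos (p.1 * Z p.2)
      simp only [Function.uncurry]
      rw [Real.norm_eq_abs, abs_le]
      constructor <;> linarith
  -- the function g(Z ω)
  set g : Ω → ℝ := fun ω => ∫ t, (1 - Real.cos (t * Z ω)) ∂ν with hg
  have hgint : Integrable g P := by
    have := hFint.integral_prod_right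
    exact this
  have hgnonneg : ∀ ω, 0 ≤ g ω := by
    intro ω
    rw [hg]
    apply setIntegral_nonneg measurableSet_Ioc
    intro t _
    have := Real.cos_le_one (t * Z ω)
    linarith
  -- closed form of g on nonzero values
  have hgform : ∀ ω, Z ω ≠ 0 → g ω = u - (Z ω)⁻¹ * Real.sin (u * Z ω) := by
    intro ω hx
    rw [hg]
    simp only
    have hci : IntervalIntegrable (fun t => Real.cos (t * Z ω)) volume 0 u := by
      apply Continuous.intervalIntegrable
      fun_prop
    have h2 : ∫ t in (0:ℝ)..u, Real.cos (t * Z ω) = (Z ω)⁻¹ * Real.sin (u * Z ω) := by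
      rw [intervalIntegral.integral_comp_mul_right Real.cos hx, integral_cos]
      simp [smul_eq_mul]
    rw [hν, ← intervalIntegral.integral_of_le hu.le,
      intervalIntegral.integral_sub intervalIntegrable_const hci,
      intervalIntegral.integral_const, h2]
    simp [smul_eq_mul]
  -- lower bound: g ≥ u/2 on the tail event
  have hsub : {ω | ε < |Z ω|} ⊆ {ω | u / 2 ≤ g ω} := by
    intro ω hω
    simp only [Set.mem_setOf_eq] at hω ⊢
    have hx : Z ω ≠ 0 := by
      intro h; rw [h] at hω; simp at hω; linarith
    rw [hgform ω hx]
    have habs : (Z ω)⁻¹ * Real.sin (u * Z ω) ≤ u / 2 := by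
      calc (Z ω)⁻¹ * Real.sin (u * Z ω) ≤ |(Z ω)⁻¹ * Real.sin (u * Z ω)| := le_abs_self _
        _ = |Z ω|⁻¹ * |Real.sin (u * Z ω)| := by rw [abs_mul, abs_inv]
        _ ≤ |Z ω|⁻¹ * 1 := by
            apply mul_le_mul_of_nonneg_left (Real.abs_sin_le_one _) (by positivity)
        _ ≤ ε⁻¹ := by
            rw [mul_one]
            exact inv_anti₀ hε hω.le
        _ = u / 2 := by rw [hu_def]; field_simp
    linarith
  -- Markov
  have hmarkov : u / 2 * (P {ω | u / 2 ≤ g ω}).toReal ≤ ∫ ω, g ω ∂P :=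
    mul_meas_ge_le_integral_of_nonneg (Filter.Eventually.of_forall hgnonneg) hgint (u / 2)
  -- Fubini
  have hswap : ∫ ω, g ω ∂P = ∫ t, (1 - Real.exp (-(K * |t| ^ χ))) ∂ν := by
    rw [hg]
    simp only
    rw [← MeasureTheory.integral_integral_swap hFint]
    exact setIntegral_congr_fun measurableSet_Ioc (fun t _ => hinner t)
  -- replace |t| by t on (0,u]
  have habs_eq : ∫ t, (1 - Real.exp (-(K * |t| ^ χ))) ∂ν
      = ∫ t in Set.Ioc 0 u, (1 - Real.exp (-(K * t ^ χ))) := by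
    rw [hν]
    apply setIntegral_congr_fun measurableSet_Ioc
    intro t ht
    simp only [abs_of_pos ht.1]
  -- upper bound on the t-integral
  have hrpow_cont : Continuous (fun t : ℝ => t ^ χ) := Real.continuous_rpow_const hχ0.le
  have hbound : ∫ t in Set.Ioc 0 u, (1 - Real.exp (-(K * t ^ χ)))
      ≤ K * (u ^ (χ + 1) / (χ + 1)) := by
    rw [← intervalIntegral.integral_of_le hu.le]
    have h1 : ∫ t in (0:ℝ)..u, K * t ^ χ = K * (u ^ (χ + 1) / (χ + 1)) := by
      rw [intervalIntegral.integral_const_mul, integral_rpow (Or.inl (by linarith))]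
      rw [Real.zero_rpow (by linarith : χ + 1 ≠ 0)]
      ring
    rw [← h1]
    apply intervalIntegral.integral_mono_on hu.le
    · exact ((continuous_const.sub (Real.continuous_exp.comp
        ((continuous_const.mul hrpow_cont).neg))).intervalIntegrable 0 u)
    · exact (continuous_const.mul hrpow_cont).intervalIntegrable 0 u
    · intro t _
      have := Real.add_one_le_exp (-(K * t ^ χ))
      linarith
  -- combine
  have hPle : (P {ω | ε < |Z ω|}).toReal ≤ (P {ω | u / 2 ≤ g ω}).toReal :=
    ENNReal.toReal_mono (measure_ne_top P _) (measure_mono hsub)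
  have hmain : u / 2 * (P {ω | ε < |Z ω|}).toReal ≤ K * (u ^ (χ + 1) / (χ + 1)) := by
    calc u / 2 * (P {ω | ε < |Z ω|}).toReal
        ≤ u / 2 * (P {ω | u / 2 ≤ g ω}).toReal := by
          apply mul_le_mul_of_nonneg_left hPle (by positivity)
      _ ≤ ∫ ω, g ω ∂P := hmarkov
      _ = _ := by rw [hswap, habs_eq]
      _ ≤ _ := hbound
  -- final arithmetic
  have hεχ : (0:ℝ) < ε ^ χ := Real.rpow_pos_of_pos hε χ
  have hu_pow : u ^ (χ + 1) = 2 ^ (χ + 1) / (ε ^ χ * ε) := by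
    rw [hu_def, Real.div_rpow (by norm_num) hε.le, Real.rpow_add hε, Real.rpow_one]
  have hfinal : (P {ω | ε < |Z ω|}).toReal ≤ 2 ^ (χ + 1) * K / ((χ + 1) * ε ^ χ) := by
    rw [hu_pow, hu_def] at hmain
    calc (P {ω | ε < |Z ω|}).toReal
        = ε * (2 / ε / 2 * (P {ω | ε < |Z ω|}).toReal) := by field_simp
      _ ≤ ε * (K * (2 ^ (χ + 1) / (ε ^ χ * ε) / (χ + 1))) :=
          mul_le_mul_of_nonneg_left hmain hε.le
      _ = 2 ^ (χ + 1) * K / ((χ + 1) * ε ^ χ) := by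
          field_simp
  calc P {ω | ε < |Z ω|} = ENNReal.ofReal (P {ω | ε < |Z ω|}).toReal :=
        (ENNReal.ofReal_toReal (measure_ne_top P _)).symm
    _ ≤ _ := ENNReal.ofReal_le_ofReal hfinal
end

section
/- Let χ ∈ (0,2] and let (X_n), (Y_n), X, Y be real random variables on a probability space (Ω, ℙ) such that X_n → X in probability, Y_n → Y in probability, and for each n the characteristic function of X_n − Y_n equals t ↦ exp(−K_n|t|^χ) with nonnegative reals K_n → 0. Then X = Y ℙ-almost surely. -/
open MeasureTheory ProbabilityTheory Filter Topology

/-- Uniqueness assertion in the proof of the paper's Theorem 3.1: if `X_n → X` and `Y_n → Y`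
in probability and `X_n - Y_n` has characteristic function `exp(-K_n|t|^χ)` with `K_n → 0`,
then `X = Y` almost surely. -/
theorem statement12
    {Ω : Type*} [MeasurableSpace Ω] (P : Measure Ω) [IsProbabilityMeasure P]
    (χ : ℝ) (hχ : χ ∈ Set.Ioc (0 : ℝ) 2)
    (Xs Ys : ℕ → Ω → ℝ) (hXs : ∀ n, Measurable (Xs n)) (hYs : ∀ n, Measurable (Ys n))
    (X Y : Ω → ℝ) (hX : Measurable X) (hY : Measurable Y)
    (hXprob : ∀ ε > (0 : ℝ), Tendsto (fun n => P {ω | ε < |Xs n ω - X ω|}) atTop (𝓝 0))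
    (hYprob : ∀ ε > (0 : ℝ), Tendsto (fun n => P {ω | ε < |Ys n ω - Y ω|}) atTop (𝓝 0))
    (K : ℕ → ℝ) (hK : ∀ n, 0 ≤ K n)
    (hchar : ∀ n t, charFn P (fun ω => Xs n ω - Ys n ω) t
      = (Real.exp (-(K n * |t| ^ χ)) : ℂ))
    (hKlim : Tendsto K atTop (𝓝 0)) :
    X =ᵐ[P] Y := by
  set Z : Ω → ℝ := fun ω => X ω - Y ω with hZdef
  have hZmeas : Measurable Z := hX.sub hY
  -- convergence in measure of Xs n - Ys n to Z
  have hTIM : TendstoInMeasure P (fun n ω => Xs n ω - Ys n ω) atTop Z := by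
    rw [tendstoInMeasure_iff_dist]
    intro ε hε
    have hX' := hXprob (ε / 4) (by linarith)
    have hY' := hYprob (ε / 4) (by linarith)
    have hb : ∀ n, P {ω | ε ≤ dist (Xs n ω - Ys n ω) (Z ω)}
        ≤ P {ω | ε / 4 < |Xs n ω - X ω|} + P {ω | ε / 4 < |Ys n ω - Y ω|} := by
      intro n
      refine le_trans (measure_mono ?_) (measure_union_le _ _)
      intro ω hω
      simp only [Set.mem_setOf_eq, Real.dist_eq] at hω
      by_contra hcon
      simp only [Set.mem_union, Set.mem_setOf_eq, not_or, not_lt] at hcon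
      obtain ⟨h1, h2⟩ := hcon
      have habs : |Xs n ω - Ys n ω - Z ω| ≤ |Xs n ω - X ω| + |Ys n ω - Y ω| := by
        have : Xs n ω - Ys n ω - Z ω = (Xs n ω - X ω) - (Ys n ω - Y ω) := by
          simp [hZdef]; ring
        rw [this]
        exact abs_sub _ _
      linarith
    have hsum : Tendsto (fun n => P {ω | ε / 4 < |Xs n ω - X ω|}
        + P {ω | ε / 4 < |Ys n ω - Y ω|}) atTop (𝓝 0) := by
      have := hX'.add hY'
      simpa using this
    exact tendsto_of_tendsto_of_tendsto_of_le_of_le tendsto_const_nhds hsum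
      (fun n => zero_le) hb
  obtain ⟨ns, hns_mono, hae⟩ := hTIM.exists_seq_tendsto_ae
  -- the characteristic function of Z is 1
  have hchar_lim : ∀ t : ℝ, charFn P Z t = 1 := by
    intro t
    have hmeas_exp : ∀ W : Ω → ℝ, Measurable W →
        AEStronglyMeasurable (fun ω => Complex.exp (t * W ω * Complex.I)) P := by
      intro W hW
      exact (Complex.measurable_exp.comp
        (((Complex.measurable_ofReal.comp hW).const_mul (t : ℂ)).mul_const
          Complex.I)).aestronglyMeasurable
    have h1 : Tendsto (fun i => charFn P (fun ω => Xs (ns i) ω - Ys (ns i) ω) t)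
        atTop (𝓝 (charFn P Z t)) := by
      unfold charFn
      refine tendsto_integral_of_dominated_convergence (fun _ => 1)
        (fun i => hmeas_exp _ ((hXs (ns i)).sub (hYs (ns i)))) (integrable_const 1) ?_ ?_
      · intro i
        filter_upwards with ω
        rw [show ((t : ℂ) * ((Xs (ns i) ω - Ys (ns i) ω : ℝ) : ℂ) * Complex.I)
            = ((t * (Xs (ns i) ω - Ys (ns i) ω) : ℝ) : ℂ) * Complex.I by push_cast; ring]
        simp [Complex.norm_exp]
      · filter_upwards [hae] with ω hω
        have hcont : Continuous (fun z : ℝ => Complex.exp (t * z * Complex.I)) := by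
          continuity
        exact (hcont.tendsto (Z ω)).comp hω
    have h2 : Tendsto (fun i => charFn P (fun ω => Xs (ns i) ω - Ys (ns i) ω) t)
        atTop (𝓝 1) := by
      simp only [hchar]
      have hK2 : Tendsto (fun i => K (ns i)) atTop (𝓝 0) :=
        hKlim.comp hns_mono.tendsto_atTop
      have : Tendsto (fun i => Real.exp (-(K (ns i) * |t| ^ χ))) atTop (𝓝 1) := by
        have h3 : Tendsto (fun i => -(K (ns i) * |t| ^ χ)) atTop (𝓝 0) := by
          have := (hK2.mul_const (|t| ^ χ)).neg
          simpa using this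
        have := (Real.continuous_exp.tendsto 0).comp h3
        simpa [Function.comp_def] using this
      have := (Complex.continuous_ofReal.tendsto 1).comp this
      simpa only [Function.comp_def, Complex.ofReal_one] using this
    exact tendsto_nhds_unique h1 h2
  -- cos (t * Z ω) = 1 a.e. for every t
  have hcos : ∀ t : ℝ, ∀ᵐ ω ∂P, Real.cos (t * Z ω) = 1 := by
    intro t
    have hint : Integrable (fun ω => Complex.exp (t * Z ω * Complex.I)) P := by
      refine Integrable.mono' (integrable_const 1)
        ((Complex.measurable_exp.comp
          (((Complex.measurable_ofReal.comp hZmeas).const_mul (t : ℂ)).mul_const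
            Complex.I)).aestronglyMeasurable) ?_
      filter_upwards with ω
      have : ((t : ℂ) * Z ω * Complex.I) = ((t * Z ω : ℝ) : ℂ) * Complex.I := by
        push_cast; ring
      rw [this]
      simp [Complex.norm_exp]
    have hre : ∫ ω, Real.cos (t * Z ω) ∂P = 1 := by
      have h1 : ∫ ω, (Complex.exp (t * Z ω * Complex.I)).re ∂P
          = (charFn P Z t).re := by
        have := integral_re (𝕜 := ℂ) hint
        simpa only [RCLike.re_to_complex, charFn] using this
      rw [hchar_lim t] at h1
      have h2 : ∀ ω, (Complex.exp (t * Z ω * Complex.I)).re = Real.cos (t * Z ω) := by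
        intro ω
        have : ((t : ℂ) * Z ω * Complex.I) = ((t * Z ω : ℝ) : ℂ) * Complex.I := by
          push_cast; ring
        rw [this, Complex.exp_ofReal_mul_I_re]
      simp only [h2] at h1
      simpa using h1
    have hint_cos : Integrable (fun ω => Real.cos (t * Z ω)) P := by
      refine Integrable.mono' (integrable_const 1)
        ((Real.measurable_cos.comp (hZmeas.const_mul t)).aestronglyMeasurable) ?_
      filter_upwards with ω
      simpa using Real.abs_cos_le_one (t * Z ω)
    have hint_sub : Integrable (fun ω => 1 - Real.cos (t * Z ω)) P :=
      (integrable_const 1).sub hint_cos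
    have hzero : ∫ ω, (1 - Real.cos (t * Z ω)) ∂P = 0 := by
      rw [integral_sub (integrable_const 1) hint_cos]
      simp [hre]
    have := (integral_eq_zero_iff_of_nonneg
      (fun ω => by simpa using Real.cos_le_one (t * Z ω)) hint_sub).mp hzero
    filter_upwards [this] with ω hω
    have : 1 - Real.cos (t * Z ω) = 0 := hω
    linarith
  -- combine t = 1 and t = √2
  filter_upwards [hcos 1, hcos (Real.sqrt 2)] with ω e1 e2
  rw [one_mul, Real.cos_eq_one_iff] at e1
  rw [Real.cos_eq_one_iff] at e2
  obtain ⟨k, hk⟩ := e1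
  obtain ⟨m, hm⟩ := e2
  have hπ : (0:ℝ) < Real.pi := Real.pi_pos
  have hZ0 : Z ω = 0 := by
    by_cases hk0 : k = 0
    · rw [hk0] at hk; simpa using hk.symm
    · exfalso
      rw [← hk] at hm
      have h2π : (2 * Real.pi) ≠ 0 := by positivity
      have hsq : (m : ℝ) * (2 * Real.pi) = (Real.sqrt 2 * (k : ℝ)) * (2 * Real.pi) := by
        rw [hm]; ring
      have hsqk : Real.sqrt 2 * (k : ℝ) = (m : ℝ) := (mul_right_cancel₀ h2π hsq).symm
      apply irrational_sqrt_two
      refine ⟨(m : ℚ) / (k : ℚ), ?_⟩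
      have hkne : (k : ℝ) ≠ 0 := Int.cast_ne_zero.mpr hk0
      push_cast
      field_simp
      linarith [hsqk]
  have : X ω - Y ω = 0 := hZ0
  linarith
end
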